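/- (Wang) Let p, q ∈ ℂ[x,y] with Jac(p,q) = p_x q_y − p_y q_x ∈ ℂ*. Then ℂ(p,q) ∩ ℂ[x,y] = ℂ[p,q]: an element of ℂ[x,y] lies in ℂ[p,q] if and only if its image in ℂ(x,y) lies in the subfield ℂ(p,q). -/

import Mathlib

open MvPolynomial

noncomputable section

/-- The polynomial ring ℂ[x,y] (x = X 0, y = X 1). -/
abbrev Rxy : Type := MvPolynomial (Fin 2) ℂ

/-- The field of fractions ℂ(x,y). -/
abbrev Kxy : Type := FractionRing Rxy

/-- The Jacobian Jac(p,q) = p_x q_y − p_y q_x. -/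
def jacPQ (p q : Rxy) : Rxy :=
  pderiv 0 p * pderiv 1 q - pderiv 1 p * pderiv 0 q

/-- (p,q) is a Keller map: Jac(p,q) is a nonzero constant. -/
def IsKeller (p q : Rxy) : Prop :=
  ∃ c : ℂ, c ≠ 0 ∧ jacPQ p q = C c


abbrev R1 : Type := MvPolynomial (Fin 1) ℂ

lemma finSuccEquiv_rename_succ (d : R1) :
    finSuccEquiv ℂ 1 (rename Fin.succ d) = Polynomial.C d := by
  induction d using MvPolynomial.induction_on with
  | C a =>
    rw [rename_C]
    have := congrArg (fun (F : ℂ →+* MvPolynomial (Fin 2) ℂ) => F a)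
      (finSuccEquiv_comp_C_eq_C 1)
    simp only [RingHom.comp_apply, RingHom.coe_coe] at this
    rw [← this]
    simp
  | add p q hp hq => rw [map_add, map_add, hp, hq, map_add]
  | mul_X p i hp => rw [map_mul, rename_X, map_mul, hp, finSuccEquiv_X_succ, map_mul]

lemma isRelPrime_algEquiv {R S : Type*} [CommSemiring R] [CommSemiring S]
    (e : R ≃+* S) {x y : R} (h : IsRelPrime x y) : IsRelPrime (e x) (e y) := by
  intro d hdx hdy
  have h1 : e.symm d ∣ x := by
    have := map_dvd e.symm hdx
    simpa using this
  have h2 : e.symm d ∣ y := by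
    have := map_dvd e.symm hdy
    simpa using this
  have := (h h1 h2).map e
  simpa using this

section Bezout
open Polynomial
open scoped nonZeroDivisors

lemma bezout_const {A : Type*} [CommRing A] [IsDomain A] [UniqueFactorizationMonoid A]
    (f g : A[X]) (hf : f ≠ 0) (hrel : IsRelPrime f g) :
    ∃ a b : A[X], ∃ d : A, d ≠ 0 ∧ a * f + b * g = Polynomial.C d := by
  classical
  letI : NormalizationMonoid A := (UniqueFactorizationMonoid.normalizationMonoid : StrongNormalizationMonoid A).toNormalizationMonoid
  letI : NormalizedGCDMonoid A := UniqueFactorizationMonoid.toNormalizedGCDMonoid A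
  set K := FractionRing A
  have hinj : Function.Injective (algebraMap A K) := IsFractionRing.injective A K
  have hmapinj : Function.Injective (Polynomial.map (algebraMap A K)) :=
    Polynomial.map_injective _ hinj
  set fm := f.map (algebraMap A K) with hfm
  set gm := g.map (algebraMap A K) with hgm
  have hfm0 : fm ≠ 0 := by
    intro h; apply hf; apply hmapinj; simpa using h
  -- coprimality in K[X]
  have hcop : IsCoprime fm gm := by
    by_contra hnc
    have hne : Ideal.span {fm, gm} ≠ ⊤ := by
      intro htop
      have h1 : (1 : K[X]) ∈ Ideal.span {fm, gm} := htop ▸ Submodule.mem_top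
      obtain ⟨a, b, hab⟩ := Ideal.mem_span_pair.mp h1
      exact hnc ⟨a, b, hab⟩
    obtain ⟨M, hM, hle⟩ := Ideal.exists_le_maximal _ hne
    haveI := hM.isPrime
    have hMprin : Submodule.IsPrincipal M := IsPrincipalIdealRing.principal M
    set π := Submodule.IsPrincipal.generator M with hπ
    have hMne : M ≠ ⊥ := by
      intro hbot
      have : fm ∈ M := hle (Ideal.subset_span (by simp))
      rw [hbot] at this
      exact hfm0 (by simpa using this)
    have hπprime : Prime π := Submodule.IsPrincipal.prime_generator_of_isPrime M hMne
    have hπf : π ∣ fm := by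
      have : fm ∈ M := hle (Ideal.subset_span (by simp))
      exact (Submodule.IsPrincipal.mem_iff_generator_dvd M).mp this
    have hπg : π ∣ gm := by
      have : gm ∈ M := hle (Ideal.subset_span (by simp))
      exact (Submodule.IsPrincipal.mem_iff_generator_dvd M).mp this
    -- build an integral common divisor
    set N := IsLocalization.integerNormalization A⁰ π with hN
    obtain ⟨⟨s, hsmem⟩, hs⟩ := IsLocalization.integerNormalization_map_to_map A⁰ π
    have hs0 : s ≠ 0 := fun h => by simp [h, mem_nonZeroDivisors_iff_ne_zero] at hsmem
    have hπ0 : π ≠ 0 := hπprime.ne_zero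
    have hmapN : N.map (algebraMap A K) = Polynomial.C (algebraMap A K s) * π := by
      rw [hs, Algebra.smul_def, Polynomial.algebraMap_apply]
    have hN0 : N ≠ 0 := by
      intro h
      rw [h, Polynomial.map_zero] at hmapN
      rcases mul_eq_zero.mp hmapN.symm with h1 | h1
      · rw [Polynomial.C_eq_zero] at h1
        exact hs0 (hinj (by simpa using h1))
      · exact hπ0 h1
    set π₀ := N.primPart with hπ₀
    -- map π₀ is a unit multiple of π
    have hNfact : N = Polynomial.C N.content * N.primPart := N.eq_C_content_mul_primPart
    have hcont0 : N.content ≠ 0 := fun h => hN0 (Polynomial.content_eq_zero_iff.mp h)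
    have hπ₀π : ∃ u : K[X], IsUnit u ∧ π₀.map (algebraMap A K) = u * π := by
      refine ⟨Polynomial.C (algebraMap A K N.content)⁻¹ * Polynomial.C (algebraMap A K s), ?_, ?_⟩
      · apply IsUnit.mul <;> rw [Polynomial.isUnit_C] <;>
        [exact (isUnit_iff_ne_zero.mpr (inv_ne_zero (fun h => hcont0 (hinj (by simpa using h)))));
         exact isUnit_iff_ne_zero.mpr (fun h => hs0 (hinj (by simpa using h)))]
      · have h5 : Polynomial.C (algebraMap A K s) * π
            = Polynomial.C (algebraMap A K N.content) * π₀.map (algebraMap A K) := by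
          rw [← hmapN]
          conv_lhs => rw [hNfact]
          rw [Polynomial.map_mul, Polynomial.map_C]
        have hcc : (algebraMap A K N.content) ≠ 0 :=
          fun h => hcont0 (hinj (by simpa using h))
        rw [mul_assoc, h5, ← mul_assoc, ← map_mul, inv_mul_cancel₀ hcc, map_one, one_mul]
    obtain ⟨u, hu, hmπ₀⟩ := hπ₀π
    -- π₀ divides f and g
    have hdvd : ∀ h : A[X], h ≠ 0 → π ∣ h.map (algebraMap A K) → π₀ ∣ h := by
      intro h hh0 hπh
      have hfact : h = Polynomial.C h.content * h.primPart := h.eq_C_content_mul_primPart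
      have hhc : h.content ≠ 0 := fun hc => hh0 (Polynomial.content_eq_zero_iff.mp hc)
      have hπprim : π ∣ h.primPart.map (algebraMap A K) := by
        have : h.map (algebraMap A K)
            = Polynomial.C (algebraMap A K h.content) * h.primPart.map (algebraMap A K) := by
          conv_lhs => rw [hfact]
          rw [Polynomial.map_mul, Polynomial.map_C]
        rw [this] at hπh
        have hCunit : IsUnit (Polynomial.C (algebraMap A K h.content) : K[X]) := by
          rw [Polynomial.isUnit_C]
          exact isUnit_iff_ne_zero.mpr (fun hc => hhc (hinj (by simpa using hc)))
        rcases hπprime.dvd_or_dvd hπh with h1 | h1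
        · exact absurd (isUnit_of_dvd_unit h1 hCunit) hπprime.not_isUnit
        · exact h1
      have hmdvd : π₀.map (algebraMap A K) ∣ h.primPart.map (algebraMap A K) := by
        rw [hmπ₀]
        exact hu.mul_left_dvd.mpr hπprim
      have := (N.isPrimitive_primPart).dvd_of_fraction_map_dvd_fraction_map
        hmdvd
      exact this.trans ⟨Polynomial.C h.content, by rw [mul_comm]; exact hfact⟩
    have hπ₀f : π₀ ∣ f := hdvd f hf hπf
    have hπ₀g : π₀ ∣ g := by
      by_cases hg0 : g = 0
      · simp [hg0]
      · exact hdvd g hg0 hπg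
    have hUπ₀ : IsUnit π₀ := hrel hπ₀f hπ₀g
    have hUm : IsUnit (π₀.map (algebraMap A K)) := by
      have := hUπ₀.map (Polynomial.mapRingHom (algebraMap A K))
      simpa using this
    rw [hmπ₀] at hUm
    exact hπprime.not_isUnit (IsUnit.mul_iff.mp hUm).2
  -- clear denominators in the Bezout identity
  obtain ⟨a', b', hab⟩ := hcop
  obtain ⟨⟨s₁, hs₁mem⟩, hs₁⟩ := IsLocalization.integerNormalization_map_to_map A⁰ a'
  obtain ⟨⟨s₂, hs₂mem⟩, hs₂⟩ := IsLocalization.integerNormalization_map_to_map A⁰ b'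
  have hs₁0 : s₁ ≠ 0 := fun h => by simp [h, mem_nonZeroDivisors_iff_ne_zero] at hs₁mem
  have hs₂0 : s₂ ≠ 0 := fun h => by simp [h, mem_nonZeroDivisors_iff_ne_zero] at hs₂mem
  set A2 := IsLocalization.integerNormalization A⁰ a'
  set B2 := IsLocalization.integerNormalization A⁰ b'
  refine ⟨Polynomial.C s₂ * A2, Polynomial.C s₁ * B2, s₁ * s₂, mul_ne_zero hs₁0 hs₂0, ?_⟩
  apply hmapinj
  rw [Polynomial.map_add, Polynomial.map_mul, Polynomial.map_mul, Polynomial.map_mul,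
    Polynomial.map_mul, Polynomial.map_C, Polynomial.map_C, Polynomial.map_C, hs₁, hs₂, map_mul]
  push_cast at hs₁ hs₂ ⊢
  rw [Algebra.smul_def, Algebra.smul_def] at *
  calc Polynomial.C (algebraMap A K s₂) * (Polynomial.C (algebraMap A K s₁) * a') * fm
        + Polynomial.C (algebraMap A K s₁) * (Polynomial.C (algebraMap A K s₂) * b') * gm
      = Polynomial.C (algebraMap A K s₁) * Polynomial.C (algebraMap A K s₂) * (a' * fm + b' * gm) := by ring
    _ = Polynomial.C (algebraMap A K s₁ * algebraMap A K s₂) := by rw [hab, map_mul]; ring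

end Bezout

lemma elim1 (f g : Rxy) (hf : f ≠ 0) (hrel : IsRelPrime f g) :
    ∃ a b : Rxy, ∃ d : R1, d ≠ 0 ∧ a * f + b * g = rename Fin.succ d := by
  set E := finSuccEquiv ℂ 1
  have hEf : (E f : Polynomial R1) ≠ 0 := by
    intro h; exact hf (by simpa using congrArg E.symm h)
  have hrel' : IsRelPrime (E f) (E g) := isRelPrime_algEquiv E.toRingEquiv hrel
  obtain ⟨a', b', d, hd0, hab⟩ := bezout_const (E f) (E g) hEf hrel'
  refine ⟨E.symm a', E.symm b', d, hd0, ?_⟩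
  apply E.injective
  rw [map_add, map_mul, map_mul, AlgEquiv.apply_symm_apply, AlgEquiv.apply_symm_apply,
    finSuccEquiv_rename_succ]
  exact hab

lemma symmC {n : ℕ} (c : ℂ) :
    (finSuccEquiv ℂ n).symm (Polynomial.C (C c)) = C c := by
  have h : (Polynomial.C (C c) : Polynomial (MvPolynomial (Fin n) ℂ)) = algebraMap ℂ _ c := by
    rw [Polynomial.algebraMap_apply, MvPolynomial.algebraMap_eq]
  rw [h, AlgEquiv.commutes, MvPolynomial.algebraMap_eq]

lemma isUnit_eq_C (u : Rxy) (h : IsUnit u) : ∃ c : ℂ, c ≠ 0 ∧ u = C c := by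
  let E := finSuccEquiv ℂ 1
  obtain ⟨r, hr, hCr⟩ := Polynomial.isUnit_iff.mp (h.map E)
  let E0 := finSuccEquiv ℂ 0
  obtain ⟨s, hs, hCs⟩ := Polynomial.isUnit_iff.mp (hr.map E0)
  obtain ⟨c, rfl⟩ : ∃ c, s = C c := ⟨_, s.eq_C_of_isEmpty⟩
  refine ⟨c, ?_, ?_⟩
  · intro h0
    rw [h0, map_zero] at hs
    exact not_isUnit_zero hs
  have hr' : r = C c := by
    have h2 := congrArg E0.symm hCs
    rw [AlgEquiv.symm_apply_apply] at h2
    rw [← h2, symmC]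
  have h3 := congrArg E.symm hCr
  rw [AlgEquiv.symm_apply_apply] at h3
  rw [← h3, hr', symmC]

lemma root_dvd (w t : Rxy) (ht : Prime t) (d : R1) (hd : d ≠ 0)
    (hdvd : t ∣ aeval (fun _ : Fin 1 => w) d) : ∃ α : ℂ, t ∣ (w - C α) := by
  set Φ : R1 →ₐ[ℂ] Polynomial ℂ := aeval (fun _ => Polynomial.X) with hΦ
  set P := Φ d with hPdef
  have hretr : ∀ e : R1, Polynomial.aeval (X 0 : R1) (Φ e) = e := by
    intro e
    have hcomp : (Polynomial.aeval (X 0 : R1)).comp Φ = AlgHom.id ℂ R1 := by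
      apply MvPolynomial.algHom_ext
      intro i
      have : i = 0 := Subsingleton.elim i 0
      subst this
      simp [hΦ]
    have := congrArg (fun (F : R1 →ₐ[ℂ] R1) => F e) hcomp
    simpa using this
  have hP0 : P ≠ 0 := by
    intro h
    apply hd
    have := hretr d
    rw [← hPdef] at this
    rw [h, map_zero] at this
    exact this.symm
  have hPw : Polynomial.aeval w P = aeval (fun _ : Fin 1 => w) d := by
    have hcomp : (Polynomial.aeval w).comp Φ = aeval (fun _ : Fin 1 => w) := by
      apply MvPolynomial.algHom_ext
      intro i
      simp [hΦ]
    have := congrArg (fun (F : R1 →ₐ[ℂ] Rxy) => F d) hcomp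
    simpa using this
  have hsplit : P.Splits := IsAlgClosed.splits P
  have hfact := hsplit.eq_prod_roots
  have heval := congrArg (Polynomial.aeval w) hfact
  rw [hPw, map_mul, map_multiset_prod, Multiset.map_map] at heval
  have hlead : (Polynomial.aeval w) (Polynomial.C P.leadingCoeff) = C P.leadingCoeff := by
    rw [Polynomial.aeval_C, MvPolynomial.algebraMap_eq]
  have hfac : ∀ a : ℂ, (Polynomial.aeval w) (Polynomial.X - Polynomial.C a) = w - C a := by
    intro a
    rw [map_sub, Polynomial.aeval_X, Polynomial.aeval_C, MvPolynomial.algebraMap_eq]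
  rw [hlead] at heval
  rw [heval] at hdvd
  have hlead0 : P.leadingCoeff ≠ 0 := Polynomial.leadingCoeff_ne_zero.mpr hP0
  have hCunit : IsUnit (C P.leadingCoeff : Rxy) := (isUnit_iff_ne_zero.mpr hlead0).map (C : ℂ →+* Rxy)
  have hdvd2 := (hCunit.dvd_mul_left).mp hdvd
  obtain ⟨z, hz, hdz⟩ := ht.exists_mem_multiset_dvd hdvd2
  rw [Multiset.mem_map] at hz
  obtain ⟨α, hα, rfl⟩ := hz
  refine ⟨α, ?_⟩
  rwa [Function.comp_apply, hfac] at hdz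

lemma jac_factor (t s₁ s₂ : Rxy) (a b : ℂ) :
    jacPQ (C a + t * s₁) (C b + t * s₂)
      = t * (pderiv 0 t * s₁ * pderiv 1 s₂ + pderiv 0 s₁ * pderiv 1 t * s₂
          + t * pderiv 0 s₁ * pderiv 1 s₂ - pderiv 1 t * s₁ * pderiv 0 s₂
          - pderiv 1 s₁ * pderiv 0 t * s₂ - t * pderiv 1 s₁ * pderiv 0 s₂) := by
  simp only [jacPQ, map_add, pderiv_C, pderiv_mul, zero_add]
  ring

lemma keller_coprime {p q : Rxy} (hK : IsKeller p q) {t : Rxy} {a b : ℂ}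
    (h1 : t ∣ p - C a) (h2 : t ∣ q - C b) : IsUnit t := by
  obtain ⟨c, hc, hjac⟩ := hK
  obtain ⟨s₁, hs₁⟩ := h1
  obtain ⟨s₂, hs₂⟩ := h2
  have hp : p = C a + t * s₁ := by rw [← hs₁]; ring
  have hq : q = C b + t * s₂ := by rw [← hs₂]; ring
  have : t ∣ C c := by
    rw [← hjac, hp, hq, jac_factor]
    exact Dvd.intro _ rfl
  exact isUnit_of_dvd_unit this ((isUnit_iff_ne_zero.mpr hc).map (C : ℂ →+* Rxy))

lemma key {p q : Rxy} (hK : IsKeller p q) (f g : Rxy) (hf : f ≠ 0) (hg : g ≠ 0)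
    (hrel : IsRelPrime f g) (t : Rxy) (ht : Prime t)
    (h1 : t ∣ aeval ![p, q] f) (h2 : t ∣ aeval ![p, q] g) : False := by
  -- elimination in the second variable
  obtain ⟨a, b, d, hd0, hab⟩ := elim1 f g hf hrel
  have hq : t ∣ aeval (fun _ : Fin 1 => q) d := by
    have := congrArg (aeval ![p, q]) hab
    rw [map_add, map_mul, map_mul, aeval_rename] at this
    have hcomp : (![p, q] ∘ Fin.succ : Fin 1 → Rxy) = fun _ => q := by
      funext i
      fin_cases i
      simp
    rw [hcomp] at this
    rw [← this]
    exact dvd_add (Dvd.dvd.mul_left h1 _) (Dvd.dvd.mul_left h2 _)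
  obtain ⟨β, hβ⟩ := root_dvd q t ht d hd0 hq
  -- elimination in the first variable, via the swap
  set σ : Fin 2 ≃ Fin 2 := Equiv.swap 0 1 with hσ
  have hswap : ∀ h : Rxy, rename σ (rename σ h) = h := by
    intro h
    rw [rename_rename]
    have : (σ ∘ σ : Fin 2 → Fin 2) = id := by
      funext i
      simp [hσ, Equiv.swap_apply_self]
    rw [this, rename_id, AlgHom.id_apply]
  have hf' : rename σ f ≠ 0 := fun h => hf (by rw [← hswap f, h, map_zero])
  have hrel' : IsRelPrime (rename σ f) (rename σ g) :=
    isRelPrime_algEquiv (renameEquiv ℂ σ).toRingEquiv hrel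
  obtain ⟨a2, b2, d2, hd20, hab2⟩ := elim1 (rename σ f) (rename σ g) hf' hrel'
  have hp : t ∣ aeval (fun _ : Fin 1 => p) d2 := by
    have := congrArg (fun z : Rxy => aeval ![p, q] (rename σ z)) hab2
    simp only [map_add, map_mul] at this
    rw [hswap f, hswap g, rename_rename] at this
    simp only [aeval_rename] at this
    have hcomp : (![p, q] ∘ (⇑σ ∘ Fin.succ) : Fin 1 → Rxy) = fun _ => p := by
      funext i
      fin_cases i
      simp [hσ]
    rw [hcomp] at this
    rw [← this]
    exact dvd_add (Dvd.dvd.mul_left h1 _) (Dvd.dvd.mul_left h2 _)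
  obtain ⟨α, hα⟩ := root_dvd p t ht d2 hd20 hp
  exact ht.not_unit (keller_coprime hK hα hβ)

lemma range_pair {α : Type*} (a b : α) : Set.range ![a, b] = {a, b} := by
  ext x
  constructor
  · rintro ⟨i, rfl⟩
    fin_cases i
    · exact Or.inl rfl
    · exact Or.inr rfl
  · rintro (rfl | rfl)
    · exact ⟨0, rfl⟩
    · exact ⟨1, rfl⟩

/-- (Wang) ℂ(p,q) ∩ ℂ[x,y] = ℂ[p,q]: a polynomial lies in ℂ[p,q] if and only
if its image in ℂ(x,y) lies in the subfield ℂ(p,q). -/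
theorem wang_intersection (p q : Rxy) (hK : IsKeller p q) :
    ∀ r : Rxy,
      r ∈ Algebra.adjoin ℂ ({p, q} : Set Rxy) ↔
      algebraMap Rxy Kxy r ∈ IntermediateField.adjoin ℂ
        ({algebraMap Rxy Kxy p, algebraMap Rxy Kxy q} : Set Kxy) := by
  intro r
  set φ : Rxy →ₐ[ℂ] Kxy := IsScalarTower.toAlgHom ℂ Rxy Kxy with hφ
  have hφinj : Function.Injective (algebraMap Rxy Kxy) := IsFractionRing.injective Rxy Kxy
  have hφr : ∀ z : Rxy, φ z = algebraMap Rxy Kxy z := fun z => rfl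
  constructor
  · intro hr
    have h1 : φ r ∈ (Algebra.adjoin ℂ ({p, q} : Set Rxy)).map φ :=
      Subalgebra.mem_map.mpr ⟨r, hr, rfl⟩
    rw [AlgHom.map_adjoin] at h1
    have himg : φ '' ({p, q} : Set Rxy)
        = {algebraMap Rxy Kxy p, algebraMap Rxy Kxy q} := by
      rw [Set.image_insert_eq, Set.image_singleton]
      rfl
    rw [himg] at h1
    exact IntermediateField.algebra_adjoin_le_adjoin ℂ _ h1
  · intro hr
    have hrange : ({algebraMap Rxy Kxy p, algebraMap Rxy Kxy q} : Set Kxy)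
        = Set.range ![algebraMap Rxy Kxy p, algebraMap Rxy Kxy q] := (range_pair _ _).symm
    rw [hrange] at hr
    obtain ⟨fr, gr, hfg⟩ := (IntermediateField.mem_adjoin_range_iff ℂ _ _).mp hr
    have haev : ∀ h : Rxy, aeval ![algebraMap Rxy Kxy p, algebraMap Rxy Kxy q] h
        = algebraMap Rxy Kxy (aeval ![p, q] h) := by
      intro h
      have hcomp : (aeval ![algebraMap Rxy Kxy p, algebraMap Rxy Kxy q] : Rxy →ₐ[ℂ] Kxy)
          = φ.comp (aeval ![p, q]) := by
        rw [MvPolynomial.comp_aeval]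
        congr 1
        funext i
        fin_cases i <;> rfl
      rw [hcomp]
      rfl
    rw [haev, haev] at hfg
    -- goal now: r ∈ adjoin
    have hadj : Algebra.adjoin ℂ ({p, q} : Set Rxy) = (aeval ![p, q] : _ →ₐ[ℂ] Rxy).range := by
      rw [← range_pair p q, Algebra.adjoin_range_eq_range_aeval]
    by_cases hG0 : aeval ![p, q] gr = 0
    · rw [hG0, map_zero, div_zero] at hfg
      have : r = 0 := hφinj (by rw [hfg, map_zero])
      rw [this]
      exact Subalgebra.zero_mem _
    -- nonzero denominator
    have hgr0 : gr ≠ 0 := fun h => hG0 (by rw [h, map_zero])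
    obtain ⟨f₁, g₁, c', hrel, hcf, hcg⟩ :=
      UniqueFactorizationMonoid.exists_reduced_factors' fr gr hgr0
    have hGne : algebraMap Rxy Kxy (aeval ![p, q] gr) ≠ 0 :=
      fun h => hG0 (hφinj (by rw [h, map_zero]))
    have hrG : r * aeval ![p, q] gr = aeval ![p, q] fr := by
      apply hφinj
      rw [map_mul, hfg, div_mul_cancel₀ _ hGne]
    have hcf' : aeval ![p, q] fr = aeval ![p, q] c' * aeval ![p, q] f₁ := by
      rw [← map_mul, hcf]
    have hcg' : aeval ![p, q] gr = aeval ![p, q] c' * aeval ![p, q] g₁ := by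
      rw [← map_mul, hcg]
    have hc'0 : aeval ![p, q] c' ≠ 0 := by
      intro h
      apply hG0
      rw [hcg', h, zero_mul]
    have hψg₁0 : aeval ![p, q] g₁ ≠ 0 := by
      intro h
      apply hG0
      rw [hcg', h, mul_zero]
    have hrg₁ : r * aeval ![p, q] g₁ = aeval ![p, q] f₁ := by
      have h2 : aeval ![p, q] c' * (r * aeval ![p, q] g₁)
          = aeval ![p, q] c' * aeval ![p, q] f₁ := by
        rw [← hcf', ← hrG, hcg']
        ring
      exact mul_left_cancel₀ hc'0 h2
    have hg₁0 : g₁ ≠ 0 := fun h => hψg₁0 (by rw [h, map_zero])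
    have hunit : IsUnit (aeval ![p, q] g₁) := by
      by_cases hf₁0 : f₁ = 0
      · have : IsUnit g₁ := hrel (hf₁0 ▸ dvd_zero g₁) dvd_rfl
        exact this.map (aeval ![p, q])
      by_contra hnu
      obtain ⟨t, htirr, htdvd⟩ :=
        WfDvdMonoid.exists_irreducible_factor hnu hψg₁0
      have ht : Prime t := UniqueFactorizationMonoid.irreducible_iff_prime.mp htirr
      have h2 : t ∣ aeval ![p, q] f₁ := hrg₁ ▸ htdvd.mul_left r
      exact key hK f₁ g₁ hf₁0 hg₁0 hrel t ht h2 htdvd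
    obtain ⟨c₀, hc₀, hgC⟩ := isUnit_eq_C _ hunit
    have hrval : r = aeval ![p, q] (C c₀⁻¹ * f₁) := by
      rw [map_mul, aeval_C]
      have : r * C c₀ = aeval ![p, q] f₁ := by rw [← hgC, hrg₁]
      rw [← this]
      have halg : (algebraMap ℂ Rxy) c₀⁻¹ = C c₀⁻¹ := MvPolynomial.algebraMap_eq ℂ (Fin 2) ▸ rfl
      rw [halg]
      rw [mul_comm (C c₀⁻¹) _, mul_assoc, ← C_mul, mul_comm c₀ _, inv_mul_cancel₀ hc₀, C_1, mul_one]
    rw [hadj, hrval]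
    exact ⟨C c₀⁻¹ * f₁, rfl⟩
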